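/- For every natural number 𝐧, the map ι̃ : A_𝐧 → 𝒫¹ takes values in 𝒬_𝐧, and the resulting map ι̃ : A_𝐧 → 𝒬_𝐧 is surjective. -/

import Mathlib

/-- A partition: a nonincreasing list of positive integers (possibly empty). -/
def IsPartition (p : List ℕ) : Prop := p.Pairwise (· ≥ ·) ∧ ∀ x ∈ p, 0 < x

/-- `𝒫̃`: partitions with an even number of parts in which the parts pair up:
`p₁ = p₂, p₃ = p₄, …` (stated 0-indexed). -/
def Ptilde : Set (List ℕ) :=
  {p | IsPartition p ∧ Even p.length ∧ ∀ i, p.getD (2 * i) 0 = p.getD (2 * i + 1) 0}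

/-- `𝒮^κ` for `κ ∈ {0,1}`: partitions with all parts even (and, if `κ = 0`,
an even number of parts). -/
def SK (κ : ℕ) : Set (List ℕ) :=
  {r | IsPartition r ∧ (∀ x ∈ r, x % 2 = 0) ∧ (κ = 0 → Even r.length)}

/-- `𝒮^κ_N`. -/
def SKN (κ N : ℕ) : Set (List ℕ) := {r | r ∈ SK κ ∧ r.sum = N}

/-- `𝒜^κ_{2n} = {(r_*, p_*) ∈ 𝒮^κ × 𝒫̃ : |r_*| + |p_*| = 2n}`. -/
def AK (κ n : ℕ) : Set (List ℕ × List ℕ) :=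
  {rp | rp.1 ∈ SK κ ∧ rp.2 ∈ Ptilde ∧ rp.1.sum + rp.2.sum = 2 * n}

/-- The partition whose multiset of parts is the disjoint union of the multisets of
parts of `r` and `p`: sort `r ++ p` nonincreasingly. -/
def pmerge (r p : List ℕ) : List ℕ := (r ++ p).mergeSort (fun a b => decide (b ≤ a))

/-- `𝒬`: partitions in which every even part has even multiplicity. -/
def Qset : Set (List ℕ) :=
  {c | IsPartition c ∧ ∀ j, j % 2 = 0 → Even (c.count j)}

/-- `𝒬_N`. -/
def QN (N : ℕ) : Set (List ℕ) := {c | c ∈ Qset ∧ c.sum = N}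

/-- The odd parts of `l`, listed in (nonincreasing) order with multiplicity:
`r¹ ≥ r² ≥ … ≥ r^s`. -/
def oddParts (l : List ℕ) : List ℕ := l.filter (fun x => x % 2 = 1)

/-- The set `ℛ` (conditions stated with 1-based indices `u` for the list of odd parts;
`(oddParts l).getD (u-1) 0` is `r^u`). -/
def Rset : Set (List ℕ) :=
  {l | l ∈ Qset ∧
    (l ≠ [] → l.getD 0 0 % 2 = 1) ∧
    (l ≠ [] → Even l.length → l.getD (l.length - 1) 0 % 2 = 1) ∧
    (∀ u, 1 ≤ u → u + 1 ≤ (oddParts l).length → u % 2 = 1 →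
        (oddParts l).getD u 0 < (oddParts l).getD (u - 1) 0) ∧
    (∀ u, 1 ≤ u → u + 1 ≤ (oddParts l).length → u % 2 = 0 →
        ∀ k < l.length,
          ¬((oddParts l).getD u 0 < l.getD k 0 ∧ l.getD k 0 < (oddParts l).getD (u - 1) 0))}

/-- `ℛ_N = ℛ ∩ 𝒬_N`. -/
def RN (N : ℕ) : Set (List ℕ) := {l | l ∈ Rset ∧ l.sum = N}

/-- `A_𝐧 = {(r_*, p_*) ∈ ℛ × 𝒫̃ : |r_*| + |p_*| = 𝐧}`. -/
def An (m : ℕ) : Set (List ℕ × List ℕ) :=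
  {rp | rp.1 ∈ Rset ∧ rp.2 ∈ Ptilde ∧ rp.1.sum + rp.2.sum = m}

section StmtFiveAux

private lemma pmerge_perm' (r p : List ℕ) :
    ((r ++ p).mergeSort (fun a b => decide (b ≤ a))).Perm (r ++ p) :=
  List.mergeSort_perm _ _

private lemma pmerge_sorted' (r p : List ℕ) :
    ((r ++ p).mergeSort (fun a b => decide (b ≤ a))).Pairwise (· ≥ ·) := by
  have h := List.pairwise_mergeSort (le := fun a b : ℕ => decide (b ≤ a))
    (fun a b c h1 h2 => by simp at *; omega)
    (fun a b => by simp; omega) (r ++ p)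
  exact h.imp (by simp)

private lemma pairs_count : ∀ (p : List ℕ),
    (∀ i, p.getD (2 * i) 0 = p.getD (2 * i + 1) 0) → (∀ x ∈ p, 0 < x) →
    ∀ j, Even (p.count j)
  | [], _, _ => by simp
  | [a], hp, hpos => by
      have h0 := hp 0
      have h1 := hpos a (by simp)
      simp at h0
      omega
  | a :: b :: q, hp, hpos => by
      have hab : a = b := by simpa using hp 0
      have hq := pairs_count q (fun i => by
          have := hp (i + 1)
          simpa [Nat.mul_add, List.getD_cons_succ] using this)
        (fun x hx => hpos x (by simp [hx]))
      intro j
      rcases hq j with ⟨k, hk⟩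
      subst hab
      by_cases hja : j = a
      · subst hja
        refine ⟨k + 1, ?_⟩
        simp [List.count_cons, hk]
        omega
      · refine ⟨k, ?_⟩
        simpa [List.count_cons, hja, Ne.symm hja] using hk

private lemma count_even_pairs : ∀ (p : List ℕ), p.Pairwise (· ≥ ·) →
    (∀ j, Even (p.count j)) →
    Even p.length ∧ ∀ i, p.getD (2 * i) 0 = p.getD (2 * i + 1) 0
  | [], _, _ => ⟨Even.zero, fun _ => rfl⟩
  | a :: t, hs, hc => by
      have h1 : 1 ≤ (a :: t).count a :=
        List.count_pos_iff.mpr List.mem_cons_self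
      have h2 : 2 ≤ (a :: t).count a := by
        rcases hc a with ⟨k, hk⟩; omega
      have hat : a ∈ t := by
        have hct : 1 ≤ t.count a := by
          have := List.count_cons_self (a := a) (l := t)
          omega
        exact List.count_pos_iff.mp hct
      cases t with
      | nil => simp at hat
      | cons b t' =>
        have hba : b = a := by
          rcases List.mem_cons.mp hat with h | h
          · exact h.symm
          · have h3 : a ≥ b := (List.pairwise_cons.mp hs).1 b List.mem_cons_self
            have h4 : b ≥ a := (List.pairwise_cons.mp (List.pairwise_cons.mp hs).2).1 a h
            omega
        subst hba
        have hs' : t'.Pairwise (· ≥ ·) := (List.pairwise_cons.mp (List.pairwise_cons.mp hs).2).2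
        have hc' : ∀ j, Even (t'.count j) := by
          intro j
          rcases hc j with ⟨k, hk⟩
          by_cases hjb : j = b
          · subst hjb
            refine ⟨k - 1, ?_⟩
            simp [List.count_cons] at hk
            omega
          · refine ⟨k, ?_⟩
            simp [List.count_cons, hjb, Ne.symm hjb] at hk
            omega
        obtain ⟨hlen, hpair⟩ := count_even_pairs t' hs' hc'
        refine ⟨by simpa [Nat.even_add_one] using hlen, ?_⟩
        intro i
        cases i with
        | zero => simp
        | succ i =>
          have := hpair i
          simpa [Nat.mul_add, List.getD_cons_succ] using this

end StmtFiveAux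

/-- for every `𝐧`, the map `ι̃ : A_𝐧 → 𝒫¹`, `(r,p) ↦` the partition whose
parts are the disjoint union of the parts of `r` and of `p`, takes values in `𝒬_𝐧`,
and the resulting map `A_𝐧 → 𝒬_𝐧` is surjective. -/

theorem stmt5 (m : ℕ) :
    (∀ rp ∈ An m, pmerge rp.1 rp.2 ∈ QN m) ∧
    (∀ c ∈ QN m, ∃ rp ∈ An m, pmerge rp.1 rp.2 = c) := by
  constructor
  · rintro ⟨r, p⟩ ⟨hr, hp, hsum⟩
    have hperm := pmerge_perm' r p
    refine ⟨⟨⟨pmerge_sorted' r p, ?_⟩, ?_⟩, ?_⟩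
    · intro x hx
      rcases List.mem_append.mp (hperm.mem_iff.mp hx) with h | h
      · exact hr.1.1.2 x h
      · exact hp.1.2 x h
    · intro j hj
      have hcnt : (pmerge r p).count j = r.count j + p.count j := by
        have := hperm.count_eq j
        simpa [List.count_append, pmerge] using this
      rw [hcnt]
      exact (hr.1.2 j hj).add (pairs_count p hp.2.2 hp.1.2 j)
    · have hsum' : r.sum + p.sum = m := hsum
      have hsum2 : (pmerge r p).sum = r.sum + p.sum := by
        have := hperm.sum_eq
        simpa [List.sum_append, pmerge] using this
      show (pmerge r p).sum = m
      omega
  · rintro c ⟨⟨⟨hcs, hcpos⟩, hccnt⟩, hcsum⟩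
    set r := c.dedup.filter (fun x => decide (c.count x % 2 = 1)) with hrdef
    set p := c.diff r with hpdef
    have hrsub : r.Sublist c := List.filter_sublist.trans c.dedup_sublist
    have hrnd : r.Nodup := c.nodup_dedup.filter _
    have hmemr : ∀ x, x ∈ r ↔ x ∈ c ∧ c.count x % 2 = 1 := by
      intro x
      simp [hrdef, List.mem_filter, List.mem_dedup]
    have hcountr : ∀ j, r.count j = if c.count j % 2 = 1 then 1 else 0 := by
      intro j
      by_cases h : c.count j % 2 = 1
      · rw [if_pos h]
        refine List.count_eq_one_of_mem hrnd ((hmemr j).mpr ⟨?_, h⟩)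
        exact List.count_pos_iff.mp (by omega)
      · rw [if_neg h, List.count_eq_zero]
        intro hmem
        exact h ((hmemr j).mp hmem).2
    have hperm : (r ++ p).Perm c := by
      refine List.subperm_append_diff_self_of_count_le ?_
      intro x hx
      have h1 := hcountr x
      have h2 : 1 ≤ c.count x := List.count_pos_iff.mpr ((hmemr x).mp hx).1
      rw [hcountr x]
      split <;> omega
    have hcrel : ∀ j, r.count j + p.count j = c.count j := by
      intro j
      have := hperm.count_eq j
      simpa [List.count_append] using this
    have hpsub : p.Sublist c := List.diff_sublist c r
    have hps : p.Pairwise (· ≥ ·) := hcs.sublist hpsub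
    have hppos : ∀ x ∈ p, 0 < x := fun x hx => hcpos x (hpsub.subset hx)
    have hpcnt : ∀ j, Even (p.count j) := by
      intro j
      have h1 := hcountr j
      have h2 := hcrel j
      rw [Nat.even_iff]
      by_cases h : c.count j % 2 = 1
      · rw [if_pos h] at h1
        omega
      · rw [if_neg h] at h1
        omega
    obtain ⟨hplen, hppair⟩ := count_even_pairs p hps hpcnt
    have hrs : r.Pairwise (· ≥ ·) := hcs.sublist hrsub
    have hrpos : ∀ x ∈ r, 0 < x := fun x hx => hcpos x (hrsub.subset hx)
    have hrodd : ∀ x ∈ r, x % 2 = 1 := by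
      intro x hx
      by_contra hxe
      have h1 : x % 2 = 0 := by omega
      have h2 := hccnt x h1
      rw [Nat.even_iff] at h2
      have := ((hmemr x).mp hx).2
      omega
    have hOP : oddParts r = r := by
      refine List.filter_eq_self.mpr ?_
      intro a ha
      simpa using hrodd a ha
    have hstrict : ∀ i j, (hi : i < r.length) → (hj : j < r.length) → i < j →
        r[j] < r[i] := by
      have hp1 : r.Pairwise (· > ·) := by
        refine (hrs.and hrnd).imp ?_
        rintro a b ⟨h1, h2⟩
        omega
      intro i j hi hj hij
      exact List.pairwise_iff_getElem.mp hp1 i j hi hj hij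
    have hrQ : r ∈ Qset := by
      refine ⟨⟨hrs, hrpos⟩, ?_⟩
      intro j hj
      have h1 := hcountr j
      have h2 := hccnt j hj
      rw [Nat.even_iff] at h2
      rw [h1, if_neg (by omega)]
      exact Even.zero
    have hrR : r ∈ Rset := by
      refine ⟨hrQ, ?_, ?_, ?_, ?_⟩
      · intro hne
        have hlen : 0 < r.length := List.length_pos_iff.mpr hne
        rw [List.getD_eq_getElem _ _ hlen]
        exact hrodd _ (List.getElem_mem hlen)
      · intro hne _
        have hlen : 0 < r.length := List.length_pos_iff.mpr hne
        have hlt : r.length - 1 < r.length := by omega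
        rw [List.getD_eq_getElem _ _ hlt]
        exact hrodd _ (List.getElem_mem hlt)
      · intro u hu1 hu2 _
        rw [hOP] at hu2 ⊢
        have h1 : u < r.length := by omega
        have h2 : u - 1 < r.length := by omega
        rw [List.getD_eq_getElem _ _ h1, List.getD_eq_getElem _ _ h2]
        exact hstrict (u - 1) u h2 h1 (by omega)
      · intro u hu1 hu2 _ k hk
        rw [hOP] at hu2 ⊢
        have h1 : u < r.length := by omega
        have h2 : u - 1 < r.length := by omega
        rw [List.getD_eq_getElem _ _ h1, List.getD_eq_getElem _ _ h2,
          List.getD_eq_getElem _ _ hk]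
        rintro ⟨ha, hb⟩
        rcases lt_trichotomy k u with hlt | heq | hgt
        · rcases Nat.lt_or_ge k (u - 1) with hlt2 | hge2
          · have := hstrict k (u - 1) hk h2 hlt2
            omega
          · have hke : k = u - 1 := by omega
            subst hke
            omega
        · subst heq
          omega
        · have := hstrict u k h1 hk hgt
          omega
    have hpP : p ∈ Ptilde := ⟨⟨hps, hppos⟩, hplen, hppair⟩
    refine ⟨(r, p), ⟨hrR, hpP, ?_⟩, ?_⟩
    · show r.sum + p.sum = m
      have := hperm.sum_eq
      simp [List.sum_append] at this
      omega
    · refine List.Perm.eq_of_pairwise (fun a b _ _ h1 h2 => le_antisymm h2 h1)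
        (pmerge_sorted' r p) hcs ((pmerge_perm' r p).trans hperm)
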